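/- arXiv:2505.13118 — 2 statements merged into one kernel-verified Lean document; each statement's English description precedes it below -/
import Mathlib

section
/- The proportional Shapley random-order distribution is a probability mass function: if v({i}) > 0 for all i ∈ D = {1,...,d}, then Σ_{π ∈ S_D} Π_{j=2}^d [v({π_j}) / Σ_{k=1}^{j} v({π_k})] = 1, where the product is over positions j of the permutation π = (π_1,...,π_d). -/
lemma map_succ_Ici {n : ℕ} (i : Fin n) :
    (Finset.Ici i).map (Fin.succEmb n) = Finset.Ici i.succ := by
  ext k
  simp only [Finset.mem_map, Finset.mem_Ici, Fin.succEmb, Function.Embedding.coeFn_mk]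
  constructor
  · rintro ⟨k', hk', rfl⟩
    exact Fin.succ_le_succ_iff.mpr hk'
  · intro hk
    have hk0 : k ≠ 0 := by
      rintro rfl
      exact lt_irrefl _ (lt_of_lt_of_le (Fin.succ_pos i) hk)
    obtain ⟨k', rfl⟩ := Fin.exists_succ_eq.mpr hk0
    exact ⟨k', Fin.succ_le_succ_iff.mp hk, rfl⟩

lemma aux_ici : ∀ (n : ℕ) (w : Fin n → ℝ), (∀ i, 0 < w i) →
    ∑ σ : Equiv.Perm (Fin n), ∏ j, w (σ j) / ∑ k ∈ Finset.Ici j, w (σ k) = 1 := by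
  intro n
  induction n with
  | zero => intro w hw; simp
  | succ n ih =>
    intro w hw
    rw [← Equiv.sum_comp Equiv.Perm.decomposeFin.symm, Fintype.sum_prod_type]
    have hIci0 : (Finset.Ici (0 : Fin (n+1))) = Finset.univ := by
      ext k; simp [Fin.zero_le]
    have key : ∀ p : Fin (n+1), ∀ e : Equiv.Perm (Fin n),
        (∏ j, w (Equiv.Perm.decomposeFin.symm (p, e) j) /
          ∑ k ∈ Finset.Ici j, w (Equiv.Perm.decomposeFin.symm (p, e) k))
        = (w p / ∑ k, w k) *
          ∏ i : Fin n, (fun x => w (Equiv.swap 0 p x.succ)) (e i) /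
            ∑ k ∈ Finset.Ici i, (fun x => w (Equiv.swap 0 p x.succ)) (e k) := by
      intro p e
      rw [Fin.prod_univ_succ]
      congr 1
      · rw [Equiv.Perm.decomposeFin_symm_apply_zero, hIci0,
          Equiv.sum_comp (Equiv.Perm.decomposeFin.symm (p, e)) w]
      · apply Finset.prod_congr rfl
        intro i _
        rw [Equiv.Perm.decomposeFin_symm_apply_succ, ← map_succ_Ici, Finset.sum_map]
        simp [Equiv.Perm.decomposeFin_symm_apply_succ]
    simp only [key]
    have hsum : ∀ p : Fin (n+1),
        ∑ e : Equiv.Perm (Fin n), ∏ i : Fin n, (fun x => w (Equiv.swap 0 p x.succ)) (e i) /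
            ∑ k ∈ Finset.Ici i, (fun x => w (Equiv.swap 0 p x.succ)) (e k) = 1 :=
      fun p => ih (fun x => w (Equiv.swap 0 p x.succ)) (fun i => hw _)
    have step : ∀ p : Fin (n+1),
        (∑ e : Equiv.Perm (Fin n), (w p / ∑ k, w k) *
          ∏ i : Fin n, (fun x => w (Equiv.swap 0 p x.succ)) (e i) /
            ∑ k ∈ Finset.Ici i, (fun x => w (Equiv.swap 0 p x.succ)) (e k))
        = w p / ∑ k, w k := by
      intro p
      rw [← Finset.mul_sum, hsum p, mul_one]
    rw [Finset.sum_congr rfl (fun p _ => step p), ← Finset.sum_div]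
    exact div_self (ne_of_gt (Finset.sum_pos (fun i _ => hw i) Finset.univ_nonempty))

lemma sum_Iic_rev {d : ℕ} (f : Fin d → ℝ) (j : Fin d) :
    ∑ k ∈ Finset.Iic j.rev, f k.rev = ∑ k ∈ Finset.Ici j, f k := by
  apply Finset.sum_nbij' (fun k => Fin.rev k) (fun k => Fin.rev k)
  · intro k hk
    simp only [Finset.mem_Iic] at hk
    simpa only [Finset.mem_Ici] using (Fin.rev_le_rev.mpr hk).trans_eq' (by rw [Fin.rev_rev])
  · intro k hk
    simp only [Finset.mem_Ici] at hk
    simp only [Finset.mem_Iic]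
    exact Fin.rev_le_rev.mpr hk
  · intro k _; exact Fin.rev_rev k
  · intro k _; exact Fin.rev_rev k
  · intro k _; rfl

/-- The proportional Shapley random-order distribution is a probability mass
function: if all singleton values are strictly positive, then
`∑_π ∏_{j=2}^d v {π j} / ∑_{k ≤ j} v {π k} = 1` over all `d!` permutations. -/
theorem proportional_shapley_random_order_is_pmf
    (d : ℕ) (v : Finset (Fin d) → ℝ)
    (hv : ∀ i : Fin d, 0 < v {i}) :
    ∑ π : Equiv.Perm (Fin d),
      ∏ j ∈ Finset.univ.filter (fun j : Fin d => (j : ℕ) ≠ 0),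
        v {π j} / ∑ k ∈ Finset.Iic j, v {π k} = 1 := by
  have hfull : ∀ π : Equiv.Perm (Fin d),
      (∏ j ∈ Finset.univ.filter (fun j : Fin d => (j : ℕ) ≠ 0),
        v {π j} / ∑ k ∈ Finset.Iic j, v {π k})
      = ∏ j, v {π j} / ∑ k ∈ Finset.Iic j, v {π k} := by
    intro π
    apply Finset.prod_subset (Finset.filter_subset _ _)
    intro j _ hj
    simp only [Finset.mem_filter, Finset.mem_univ, true_and, not_not] at hj
    have hIic : Finset.Iic j = {j} := by
      ext k
      simp only [Finset.mem_Iic, Finset.mem_singleton]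
      constructor
      · intro hk
        have hk' := Fin.le_def.mp hk
        exact Fin.ext (by omega)
      · rintro rfl; exact le_refl _
    rw [hIic, Finset.sum_singleton, div_self (ne_of_gt (hv _))]
  simp only [hfull]
  rw [← Equiv.sum_comp (Equiv.mulRight Fin.revPerm)]
  have hterm : ∀ σ : Equiv.Perm (Fin d),
      (∏ j, v {((Equiv.mulRight Fin.revPerm) σ) j} / ∑ k ∈ Finset.Iic j, v {((Equiv.mulRight Fin.revPerm) σ) k})
      = ∏ j, v {σ j} / ∑ k ∈ Finset.Ici j, v {σ k} := by
    intro σ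
    rw [← Equiv.prod_comp Fin.revPerm
      (fun j => v {((Equiv.mulRight Fin.revPerm) σ) j} / ∑ k ∈ Finset.Iic j, v {((Equiv.mulRight Fin.revPerm) σ) k})]
    apply Finset.prod_congr rfl
    intro j _
    have h1 : ((Equiv.mulRight Fin.revPerm) σ) (Fin.revPerm j) = σ j := by
      simp [Equiv.Perm.mul_apply]
    rw [h1]
    congr 1
    simpa using sum_Iic_rev (fun k => v {σ k}) j
  rw [Finset.sum_congr rfl (fun σ _ => hterm σ)]
  exact aux_ici d (fun i => v {i}) hv
end

section
/- Marginal coverage of split conformal prediction: if the conformity scores s(X_1,Y_1,f̂), ..., s(X_n,Y_n,f̂), s(X_{n+1},Y_{n+1},f̂) of the calibration points and the test point are exchangeable real random variables that are almost surely distinct, and Ĉ(X_{n+1}) = {y : s(X_{n+1}, y, f̂) ≤ q_{1-α}(S)} where q_{1-α}(S) is the ⌈(1-α)(n+1)⌉-th smallest calibration score, then 1 - α ≤ P(Y_{n+1} ∈ Ĉ(X_{n+1})) ≤ 1 - α + 1/(n+1). -/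
open MeasureTheory


open Finset

private noncomputable def cnt {n : ℕ} (v : Fin (n+1) → ℝ) (t : ℝ) : ℕ :=
  (Finset.univ.filter (fun i : Fin n => v i.castSucc ≤ t)).card

private lemma cnt_mono {n : ℕ} (v : Fin (n+1) → ℝ) : Monotone (cnt v) := by
  intro s t hst
  refine Finset.card_le_card (fun i hi => ?_)
  simp only [Finset.mem_filter] at *
  exact ⟨hi.1, hi.2.trans hst⟩

private lemma det_lemma {n : ℕ} (v : Fin (n+1) → ℝ) (hv : Function.Injective v)
    (k : ℕ) (hk1 : 1 ≤ k) (hkn : k ≤ n) :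
    (v (Fin.last n) ≤ sInf {t : ℝ | k ≤ cnt v t} ↔
      (Finset.univ.filter (fun i : Fin (n+1) => v i ≤ v (Fin.last n))).card ≤ k) := by
  have hn : 0 < n := hk1.trans hkn
  set S : Set ℝ := {t : ℝ | k ≤ cnt v t} with hS
  obtain ⟨i0⟩ : Nonempty (Fin n) := ⟨⟨0, hn⟩⟩
  have hne : (Finset.univ.image (fun i : Fin n => v i.castSucc)).Nonempty :=
    ⟨v i0.castSucc, Finset.mem_image_of_mem _ (Finset.mem_univ i0)⟩
  -- S nonempty
  have hSne : S.Nonempty := by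
    set t0 := (Finset.univ.image (fun i : Fin n => v i.castSucc)).max' hne with ht0
    refine ⟨t0, ?_⟩
    have heq : Finset.univ.filter (fun i : Fin n => v i.castSucc ≤ t0) = Finset.univ := by
      refine Finset.filter_true_of_mem (fun i _ => ?_)
      exact Finset.le_max' (Finset.univ.image (fun i : Fin n => v i.castSucc)) _
        (Finset.mem_image_of_mem _ (Finset.mem_univ i))
    show k ≤ cnt v t0
    rw [cnt, heq, Finset.card_fin]
    exact hkn
  -- bddBelow
  have hSbdd : BddBelow S := by
    refine ⟨(Finset.univ.image (fun i : Fin n => v i.castSucc)).min' hne, fun t ht => ?_⟩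
    have hcard : (Finset.univ.filter (fun i : Fin n => v i.castSucc ≤ t)).Nonempty := by
      rw [← Finset.card_pos]; exact lt_of_lt_of_le hk1 ht
    obtain ⟨i, hi⟩ := hcard
    simp only [Finset.mem_filter] at hi
    exact le_trans (Finset.min'_le _ _ (Finset.mem_image_of_mem _ (Finset.mem_univ i))) hi.2
  set m := sInf S with hm
  have hlt : ∀ t, t < m → cnt v t < k := by
    intro t ht
    by_contra h
    exact absurd (csInf_le hSbdd (not_lt.mp h)) (not_le.mpr ht)
  have hmem : k ≤ cnt v m := by
    by_contra h
    push_neg at h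
    have hex : ∃ i : Fin n, m < v i.castSucc := by
      by_contra hno
      push_neg at hno
      have heq : Finset.univ.filter (fun i : Fin n => v i.castSucc ≤ m) = Finset.univ :=
        Finset.filter_true_of_mem (fun i _ => hno i)
      rw [cnt, heq, Finset.card_fin] at h
      omega
    set G := (Finset.univ.filter (fun i : Fin n => m < v i.castSucc)).image
        (fun i => v i.castSucc) with hG
    have hGne : G.Nonempty := by
      obtain ⟨i, hi⟩ := hex
      exact ⟨v i.castSucc, Finset.mem_image_of_mem _ (Finset.mem_filter.mpr ⟨Finset.mem_univ i, hi⟩)⟩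
    have hmδ : m < G.min' hGne := by
      obtain ⟨i, hi, hvi⟩ := Finset.mem_image.mp (G.min'_mem hGne)
      rw [Finset.mem_filter] at hi
      rw [hvi] at hi
      exact hi.2
    have key : ∀ t, t < G.min' hGne → cnt v t < k := by
      intro t ht
      rcases lt_or_ge t m with h' | h'
      · exact hlt t h'
      · refine lt_of_le_of_lt (Finset.card_le_card (fun i hi => ?_)) h
        simp only [Finset.mem_filter] at *
        refine ⟨hi.1, ?_⟩
        by_contra hvm
        push_neg at hvm
        have hle : G.min' hGne ≤ v i.castSucc := Finset.min'_le _ _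
          (Finset.mem_image_of_mem _ (Finset.mem_filter.mpr ⟨Finset.mem_univ i, hvm⟩))
        exact absurd (hi.2.trans_lt ht) (not_lt.mpr hle)
    have hlb : G.min' hGne ≤ m := le_csInf hSne (fun t ht => by
      by_contra h'
      exact absurd ht (not_le.mpr (key t (not_le.mp h'))))
    exact absurd hmδ (not_lt.mpr hlb)
  -- m is a calibration value
  have hcalib : ∃ i : Fin n, v i.castSucc = m := by
    have hT : (Finset.univ.filter (fun i : Fin n => v i.castSucc ≤ m)).Nonempty := by
      rw [← Finset.card_pos]; exact lt_of_lt_of_le hk1 hmem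
    set T := (Finset.univ.filter (fun i : Fin n => v i.castSucc ≤ m)).image
        (fun i => v i.castSucc) with hT'
    have hTne : T.Nonempty := hT.image _
    obtain ⟨i, hi, hvi⟩ := Finset.mem_image.mp (T.max'_mem hTne)
    rw [Finset.mem_filter] at hi
    refine ⟨i, ?_⟩
    have h1 : v i.castSucc ≤ m := hi.2
    have h2 : k ≤ cnt v (v i.castSucc) := by
      refine hmem.trans (Finset.card_le_card (fun j hj => ?_))
      simp only [Finset.mem_filter] at *
      refine ⟨hj.1, ?_⟩
      rw [hvi]
      exact Finset.le_max' T _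
        (Finset.mem_image_of_mem _ (Finset.mem_filter.mpr ⟨Finset.mem_univ j, hj.2⟩))
    exact le_antisymm h1 (csInf_le hSbdd h2)
  have hrank : (Finset.univ.filter (fun i : Fin (n+1) => v i ≤ v (Fin.last n))).card
      = cnt v (v (Fin.last n)) + 1 := by
    rw [cnt]
    have heq : (Finset.univ.filter (fun i : Fin (n+1) => v i ≤ v (Fin.last n)))
        = insert (Fin.last n) ((Finset.univ.filter
            (fun i : Fin n => v i.castSucc ≤ v (Fin.last n))).image Fin.castSucc) := by
      ext i
      simp only [Finset.mem_filter, Finset.mem_univ, true_and, Finset.mem_insert,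
        Finset.mem_image]
      constructor
      · intro hi
        rcases Fin.eq_castSucc_or_eq_last i with ⟨j, rfl⟩ | rfl
        · exact Or.inr ⟨j, hi, rfl⟩
        · exact Or.inl rfl
      · rintro (rfl | ⟨j, hj, rfl⟩)
        · exact le_refl _
        · exact hj
    rw [heq, Finset.card_insert_of_notMem, Finset.card_image_of_injective _
      (Fin.castSucc_injective n), Nat.add_comm]
    · simp only [Finset.mem_image]
      rintro ⟨j, _, hj⟩
      exact absurd hj (Fin.castSucc_lt_last j).ne
  constructor
  · intro hle
    obtain ⟨i, hi⟩ := hcalib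
    have hne' : v (Fin.last n) ≠ m := by
      rw [← hi]
      intro h
      exact absurd (hv h.symm) (Fin.castSucc_lt_last i).ne
    have hlt' : v (Fin.last n) < m := lt_of_le_of_ne hle hne'
    rw [hrank]
    have := hlt _ hlt'
    omega
  · intro hle
    rw [hrank] at hle
    by_contra h
    push_neg at h
    have : k ≤ cnt v (v (Fin.last n)) := hmem.trans (cnt_mono v h.le)
    omega

open Finset MeasureTheory

private noncomputable def rnk {n : ℕ} (v : Fin (n+1) → ℝ) (j : Fin (n+1)) : ℕ :=
  (Finset.univ.filter (fun i => v i ≤ v j)).card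

private lemma rnk_measurable {n : ℕ} (j : Fin (n+1)) :
    Measurable (fun v : Fin (n+1) → ℝ => rnk v j) := by
  have : (fun v : Fin (n+1) → ℝ => rnk v j)
      = fun v => ∑ i : Fin (n+1), if v i ≤ v j then 1 else 0 := by
    funext v
    rw [rnk, Finset.card_filter]
  rw [this]
  refine Finset.measurable_sum _ (fun i _ => ?_)
  exact Measurable.ite (measurableSet_le (measurable_pi_apply i) (measurable_pi_apply j))
    measurable_const measurable_const

private lemma rnk_comp_perm {n : ℕ} (v : Fin (n+1) → ℝ) (σ : Equiv.Perm (Fin (n+1)))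
    (j : Fin (n+1)) : rnk (fun i => v (σ i)) j = rnk v (σ j) := by
  rw [rnk, rnk]
  refine Finset.card_bij' (fun i _ => σ i) (fun i _ => σ.symm i) ?_ ?_ ?_ ?_
  · intro i hi
    simp only [Finset.mem_filter, Finset.mem_univ, true_and] at hi ⊢
    exact hi
  · intro i hi
    simp only [Finset.mem_filter, Finset.mem_univ, true_and] at hi ⊢
    simpa using hi
  · intro i _; simp
  · intro i _; simp

private lemma rnk_count {n : ℕ} (v : Fin (n+1) → ℝ) (hv : Function.Injective v)
    (k : ℕ) (hk : k ≤ n + 1) :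
    (Finset.univ.filter (fun j : Fin (n+1) => rnk v j ≤ k)).card = k := by
  have hinj : Function.Injective (rnk v) := by
    intro j j' h
    by_contra hne
    have hvne : v j ≠ v j' := fun hh => hne (hv hh)
    rcases lt_or_gt_of_ne hvne with hlt | hlt
    · have hsub : Finset.univ.filter (fun i => v i ≤ v j)
          ⊂ Finset.univ.filter (fun i => v i ≤ v j') := by
        refine Finset.ssubset_iff_of_subset (fun i hi => ?_) |>.mpr ?_
        · simp only [Finset.mem_filter, Finset.mem_univ, true_and] at *
          exact hi.trans hlt.le
        · exact ⟨j', Finset.mem_filter.mpr ⟨Finset.mem_univ _, le_refl _⟩,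
            fun hc => absurd ((Finset.mem_filter.mp hc).2.trans_lt hlt) (lt_irrefl _)⟩
      exact absurd h (Finset.card_lt_card hsub).ne
    · have hsub : Finset.univ.filter (fun i => v i ≤ v j')
          ⊂ Finset.univ.filter (fun i => v i ≤ v j) := by
        refine Finset.ssubset_iff_of_subset (fun i hi => ?_) |>.mpr ?_
        · simp only [Finset.mem_filter, Finset.mem_univ, true_and] at *
          exact hi.trans hlt.le
        · exact ⟨j, Finset.mem_filter.mpr ⟨Finset.mem_univ _, le_refl _⟩,
            fun hc => absurd ((Finset.mem_filter.mp hc).2.trans_lt hlt) (lt_irrefl _)⟩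
      exact absurd h.symm (Finset.card_lt_card hsub).ne
  have hrange : Finset.univ.image (rnk v) = Finset.Icc 1 (n+1) := by
    refine Finset.eq_of_subset_of_card_le ?_ ?_
    · intro r hr
      obtain ⟨j, _, rfl⟩ := Finset.mem_image.mp hr
      simp only [Finset.mem_Icc]
      constructor
      · rw [rnk]
        refine Finset.card_pos.mpr ⟨j, Finset.mem_filter.mpr ⟨Finset.mem_univ _, le_refl _⟩⟩
      · rw [rnk]
        exact (Finset.card_filter_le _ _).trans (by simp)
    · rw [Nat.card_Icc, Finset.card_image_of_injective _ hinj, Finset.card_fin]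
      omega
  have key : Finset.univ.filter (fun j : Fin (n+1) => rnk v j ≤ k)
      = Finset.univ.filter (fun j => rnk v j ∈ Finset.Icc 1 k) := by
    ext j
    simp only [Finset.mem_filter, Finset.mem_Icc]
    constructor
    · intro h
      refine ⟨h.1, ?_, h.2⟩
      rw [rnk]
      exact Finset.card_pos.mpr ⟨j, Finset.mem_filter.mpr ⟨Finset.mem_univ _, le_refl _⟩⟩
    · intro h
      exact ⟨h.1, h.2.2⟩
  rw [key]
  have := Finset.card_image_of_injective
    (Finset.univ.filter (fun j => rnk v j ∈ Finset.Icc 1 k)) hinj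
  rw [← this]
  have himg : (Finset.univ.filter (fun j => rnk v j ∈ Finset.Icc 1 k)).image (rnk v)
      = Finset.Icc 1 k := by
    ext r
    simp only [Finset.mem_image, Finset.mem_filter, Finset.mem_univ, true_and]
    constructor
    · rintro ⟨j, hj, rfl⟩
      exact hj
    · intro hr
      have : r ∈ Finset.univ.image (rnk v) := by
        rw [hrange]
        simp only [Finset.mem_Icc] at *
        omega
      obtain ⟨j, _, rfl⟩ := Finset.mem_image.mp this
      exact ⟨j, hr, rfl⟩
  rw [himg, Nat.card_Icc]
  omega


/-- Marginal coverage of split conformal prediction: if the scores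
`V 0, …, V n` (the first `n` being calibration scores and `V (last n)` the
test score) are exchangeable and almost surely distinct, and the threshold
`q ω` is the `k`-th smallest calibration score with `k = ⌈(1-α)(n+1)⌉`, then
the coverage probability `P(V_{n+1} ≤ q)` lies in
`[1 - α, 1 - α + 1/(n+1)]`. The `k`-th smallest value is expressed as
`sInf {t | k ≤ #{i : V i ≤ t}}`. -/
theorem split_conformal_marginal_coverage
    {Ω : Type*} [MeasurableSpace Ω] (μ : Measure Ω) [IsProbabilityMeasure μ]
    (n : ℕ) (α : ℝ) (hα : 0 < α) (hα1 : α < 1)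
    (V : Fin (n + 1) → Ω → ℝ)
    (hmeas : ∀ i, Measurable (V i))
    (hexch : ∀ σ : Equiv.Perm (Fin (n + 1)),
      Measure.map (fun ω => fun i => V (σ i) ω) μ =
        Measure.map (fun ω => fun i => V i ω) μ)
    (hdist : ∀ᵐ ω ∂μ, ∀ i j : Fin (n + 1), i ≠ j → V i ω ≠ V j ω)
    (k : ℕ) (hk : k = ⌈(1 - α) * (n + 1)⌉₊) (hkn : k ≤ n)
    (q : Ω → ℝ)
    (hq : ∀ ω, q ω = sInf {t : ℝ |
      k ≤ (Finset.univ.filter (fun i : Fin n => V i.castSucc ω ≤ t)).card}) :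
    1 - α ≤ (μ {ω | V (Fin.last n) ω ≤ q ω}).toReal ∧
      (μ {ω | V (Fin.last n) ω ≤ q ω}).toReal ≤ 1 - α + 1 / (n + 1) := by
  classical
  have hn1 : (0:ℝ) < (n:ℝ) + 1 := by positivity
  have h1k : 1 ≤ k := by
    rw [hk]
    refine Nat.one_le_ceil_iff.mpr ?_
    nlinarith
  set X : Ω → (Fin (n+1) → ℝ) := fun ω i => V i ω with hX
  have hXmeas : Measurable X := measurable_pi_lambda _ hmeas
  set A : Fin (n+1) → Set Ω := fun j => {ω | rnk (X ω) j ≤ k} with hA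
  have hAmeas : ∀ j, MeasurableSet (A j) := by
    intro j
    have : A j = X ⁻¹' ((fun v => rnk v j) ⁻¹' (Set.Iic k)) := rfl
    rw [this]
    exact hXmeas ((rnk_measurable j) measurableSet_Iic)
  -- exchangeability: all A j have the same measure
  have hAeq : ∀ j, μ (A j) = μ (A (Fin.last n)) := by
    intro j
    set σ := Equiv.swap j (Fin.last n) with hσ
    have hY : Measurable (fun ω => fun i => V (σ i) ω) :=
      measurable_pi_lambda _ (fun i => hmeas _)
    have hB : MeasurableSet {v : Fin (n+1) → ℝ | rnk v (Fin.last n) ≤ k} :=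
      (rnk_measurable _) measurableSet_Iic
    have e1 : A j = (fun ω => fun i => V (σ i) ω) ⁻¹' {v | rnk v (Fin.last n) ≤ k} := by
      ext ω
      simp only [Set.mem_preimage, Set.mem_setOf_eq, hA]
      have : (fun i => V (σ i) ω) = (fun i => X ω (σ i)) := rfl
      rw [this, rnk_comp_perm (X ω) σ (Fin.last n), hσ, Equiv.swap_apply_right]
    have e2 : A (Fin.last n) = X ⁻¹' {v | rnk v (Fin.last n) ≤ k} := rfl
    rw [e1, e2, ← Measure.map_apply hY hB, ← Measure.map_apply hXmeas hB, hexch σ]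
  -- a.e. injectivity
  have hinj : ∀ᵐ ω ∂μ, Function.Injective (X ω) := by
    filter_upwards [hdist] with ω hω
    intro i j h
    by_contra hne
    exact hω i j hne h
  -- sum of measures equals k
  have hsum : ∑ j : Fin (n+1), μ (A j) = (k : ENNReal) := by
    have h1 : ∀ j, μ (A j) = ∫⁻ ω, (A j).indicator 1 ω ∂μ := by
      intro j
      exact (lintegral_indicator_one (hAmeas j)).symm
    calc ∑ j : Fin (n+1), μ (A j)
        = ∑ j : Fin (n+1), ∫⁻ ω, (A j).indicator 1 ω ∂μ := by
          exact Finset.sum_congr rfl (fun j _ => h1 j)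
      _ = ∫⁻ ω, ∑ j : Fin (n+1), (A j).indicator 1 ω ∂μ := by
          rw [lintegral_finset_sum]
          intro j _
          exact (measurable_const.indicator (hAmeas j))
      _ = ∫⁻ _, (k : ENNReal) ∂μ := by
          refine lintegral_congr_ae ?_
          filter_upwards [hinj] with ω hω
          simp only [Set.indicator_apply, hA, Set.mem_setOf_eq, Pi.one_apply]
          rw [Finset.sum_boole]
          norm_cast
          exact rnk_count (X ω) hω k (by omega)
      _ = (k : ENNReal) := by simp
  -- measure of A last
  have hAlast : μ (A (Fin.last n)) = (k : ENNReal) / ((n : ENNReal) + 1) := by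
    have h2 : ∑ j : Fin (n+1), μ (A j) = ((n:ENNReal)+1) * μ (A (Fin.last n)) := by
      rw [Finset.sum_congr rfl (fun j _ => hAeq j), Finset.sum_const, Finset.card_fin,
        nsmul_eq_mul]
      push_cast
      ring
    rw [ENNReal.eq_div_iff (by simp) (by simp), ← h2, hsum]
  -- event equality a.e.
  have hev : {ω | V (Fin.last n) ω ≤ q ω} =ᵐ[μ] A (Fin.last n) := by
    rw [Filter.eventuallyEq_set]
    filter_upwards [hinj] with ω hω
    simp only [Set.mem_setOf_eq, hA]
    rw [hq ω]
    have heq : {t : ℝ | k ≤ (Finset.univ.filter (fun i : Fin n => V i.castSucc ω ≤ t)).card}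
        = {t : ℝ | k ≤ cnt (X ω) t} := rfl
    rw [heq]
    exact det_lemma (X ω) hω k h1k hkn
  have hμ : μ {ω | V (Fin.last n) ω ≤ q ω} = (k : ENNReal) / ((n:ENNReal)+1) := by
    rw [measure_congr hev, hAlast]
  rw [hμ]
  have htoReal : ((k : ENNReal) / ((n:ENNReal)+1)).toReal = (k : ℝ) / ((n:ℝ)+1) := by
    rw [ENNReal.toReal_div, show ((n:ENNReal)+1) = ((n+1 : ℕ):ENNReal) by push_cast; ring,
      ENNReal.toReal_natCast, ENNReal.toReal_natCast]
    push_cast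
    ring
  rw [htoReal]
  have hc1 : (1 - α) * ((n:ℝ)+1) ≤ (k:ℝ) := by
    rw [hk]
    exact_mod_cast Nat.le_ceil _
  have hc2 : (k:ℝ) < (1-α) * ((n:ℝ)+1) + 1 := by
    rw [hk]
    exact_mod_cast Nat.ceil_lt_add_one (by nlinarith)
  constructor
  · rw [le_div_iff₀ hn1]
    linarith
  · rw [div_le_iff₀ hn1]
    have heq : (1-α+1/((n:ℝ)+1))*((n:ℝ)+1) = (1-α)*((n:ℝ)+1)+1 := by
      field_simp
    rw [heq]
    linarith
end
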